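/- For every weighted automaton 𝒜 over A and S whose converging behavior assigns 0 to the empty word, there exists a normalized automaton N with the same converging behavior: ⟦N⟧ = ⟦𝒜⟧. -/

import Mathlib

open scoped Classical

/-- A weighted automaton over alphabet `A` and semiring `S`: a finite set of
states `Q`, initial distribution `I`, final distribution `F`, and a transition
matrix `M a` for each letter `a`. -/
structure WA (A : Type) (S : Type) [Semiring S] where
  Q : Type
  [fin : Fintype Q]
  [deq : DecidableEq Q]
  I : Q → S
  F : Q → S
  M : A → Matrix Q Q S

attribute [instance] WA.fin WA.deq

variable {A S : Type} [Semiring S]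

/-- The product `M(a₀)·…·M(a_{n−1})` over a finite word (identity for `[]`). -/
def Mword (𝒜 : WA A S) (w : List A) : Matrix 𝒜.Q 𝒜.Q S :=
  (w.map 𝒜.M).prod

/-- The converging behavior `⟦𝒜⟧(w) = Σ_{i,f} I(i)·M(w)_{i,f}·F(f)`. -/
def convB (𝒜 : WA A S) (w : List A) : S :=
  ∑ i, ∑ f, 𝒜.I i * Mword 𝒜 w i f * 𝒜.F f

/-- The first `n` letters of an infinite word. -/
def wpre (w : ℕ → A) (n : ℕ) : List A := (List.range n).map w

/-- A pair of states `(i,f)` is activated by the infinite word `w` if for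
every `n₀` there is `n ≥ n₀` with `M(w[0..n))_{i,f} ≠ 0`. -/
def Activated (𝒜 : WA A S) (w : ℕ → A) (i f : 𝒜.Q) : Prop :=
  ∀ n₀ : ℕ, ∃ n, n₀ ≤ n ∧ Mword 𝒜 (wpre w n) i f ≠ 0

/-- The diverging behavior `𝒜(w,n) = Σ_{(i,f) activated} I(i)·M(w[0..n))_{i,f}·F(f)`. -/
noncomputable def divB (𝒜 : WA A S) (w : ℕ → A) (n : ℕ) : S :=
  ∑ p : 𝒜.Q × 𝒜.Q,
    if Activated 𝒜 w p.1 p.2 then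
      𝒜.I p.1 * Mword 𝒜 (wpre w n) p.1 p.2 * 𝒜.F p.2
    else 0

/-- Product of converging power series: sum over all splittings of the word. -/
def cmul (x y : List A → S) : List A → S :=
  fun w => ∑ k ∈ Finset.range (w.length + 1), x (w.take k) * y (w.drop k)

/-- The multiplicative unit: 1 on the empty word, 0 elsewhere. -/
def cone : List A → S := fun w => match w with | [] => 1 | _ => 0

/-- Powers of a converging power series. -/
def cpow (x : List A → S) : ℕ → (List A → S)
  | 0 => cone
  | n + 1 => cmul x (cpow x n)

/-- The star `x* = Σ_{k ≥ 0} x^k`; for proper `x` only the terms with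
`k ≤ |w|` can contribute on the word `w`. -/
def cstar (x : List A → S) : List A → S :=
  fun w => ∑ k ∈ Finset.range (w.length + 1), cpow x k w

/-- `Rat*(S,A)`: the smallest set of converging power series containing all
finitely supported ones and closed under sum, product, and star of proper
members. -/
inductive IsRat : (List A → S) → Prop
  | finite (x : List A → S) (h : (Function.support x).Finite) : IsRat x
  | add {x y : List A → S} : IsRat x → IsRat y → IsRat (x + y)
  | mul {x y : List A → S} : IsRat x → IsRat y → IsRat (cmul x y)
  | star {x : List A → S} : IsRat x → x [] = 0 → IsRat (cstar x)

/-- `χ(w,x) = 1` iff arbitrarily long prefixes of `w` have nonzero coefficient. -/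
noncomputable def chi (w : ℕ → A) (x : List A → S) : S :=
  if ∀ n₀ : ℕ, ∃ n, n₀ ≤ n ∧ x (wpre w n) ≠ 0 then 1 else 0

/-- `s^ω(w,n) = s*(w[0..n))·χ(w,s*)`. -/
noncomputable def omegaPS (s : List A → S) : (ℕ → A) → ℕ → S :=
  fun w n => cstar s (wpre w n) * chi w (cstar s)

/-- The conjoin `(x ⋆ y)(w,n) = (x·y*)(w[0..n))·χ(w,x·y*)`. -/
noncomputable def conjoinPS (x y : List A → S) : (ℕ → A) → ℕ → S :=
  fun w n => cmul x (cstar y) (wpre w n) * chi w (cmul x (cstar y))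

/-- `Rat^ω(S,A)`: the smallest set of diverging power series closed under
finite sums and left/right scalar multiplication containing all `x ⋆ y` and
`z^ω` for proper rational `x`, `y`, `z`. -/
inductive IsRatOmega : ((ℕ → A) → ℕ → S) → Prop
  | zero : IsRatOmega (fun _ _ => 0)
  | add {p q : (ℕ → A) → ℕ → S} :
      IsRatOmega p → IsRatOmega q → IsRatOmega (fun w n => p w n + q w n)
  | smul_left (s : S) {p : (ℕ → A) → ℕ → S} :
      IsRatOmega p → IsRatOmega (fun w n => s * p w n)
  | smul_right (s : S) {p : (ℕ → A) → ℕ → S} :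
      IsRatOmega p → IsRatOmega (fun w n => p w n * s)
  | conjoin {x y : List A → S} :
      IsRat x → x [] = 0 → IsRat y → y [] = 0 → IsRatOmega (conjoinPS x y)
  | omega {z : List A → S} : IsRat z → z [] = 0 → IsRatOmega (omegaPS z)

/-- Scalar multiples `l·𝒜·r` of an automaton. -/
def smulWA (l : S) (𝒜 : WA A S) (r : S) : WA A S where
  Q := 𝒜.Q
  I := fun i => l * 𝒜.I i
  F := fun f => 𝒜.F f * r
  M := 𝒜.M

/-- The disjoint-union (sum) automaton. -/
def addWA (𝒜 ℬ : WA A S) : WA A S where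
  Q := 𝒜.Q ⊕ ℬ.Q
  I := Sum.elim 𝒜.I ℬ.I
  F := Sum.elim 𝒜.F ℬ.F
  M := fun a => Matrix.fromBlocks (𝒜.M a) 0 0 (ℬ.M a)

/-- `𝒜` is normalized with initial state `qI` and final state `qF`. -/
def IsNormalizedAt (𝒜 : WA A S) (qI qF : 𝒜.Q) : Prop :=
  qI ≠ qF ∧ (∀ i, 𝒜.I i = if i = qI then 1 else 0) ∧
    (∀ f, 𝒜.F f = if f = qF then 1 else 0) ∧
    (∀ (a : A) (i : 𝒜.Q), 𝒜.M a i qI = 0) ∧ (∀ (a : A) (j : 𝒜.Q), 𝒜.M a qF j = 0)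

/-- `𝒜` is normalized. -/
def IsNormalized (𝒜 : WA A S) : Prop := ∃ qI qF, IsNormalizedAt 𝒜 qI qF

/-- `𝒜` is a loopback automaton with loopback state `q₀`. -/
def IsLoopbackAt (𝒜 : WA A S) (q₀ : 𝒜.Q) : Prop :=
  (∀ i, 𝒜.I i = if i = q₀ then 1 else 0) ∧ (∀ f, 𝒜.F f = if f = q₀ then 1 else 0)

/-- `𝒜` is a loopback automaton. -/
def IsLoopback (𝒜 : WA A S) : Prop := ∃ q₀, IsLoopbackAt 𝒜 q₀

/-- `𝒜` is a loopback automaton with prelude. -/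
def IsLoopbackWithPrelude (𝒜 : WA A S) : Prop :=
  ∃ qI qF, qI ≠ qF ∧ (∀ i, 𝒜.I i = if i = qI then 1 else 0) ∧
    (∀ f, 𝒜.F f = if f = qF then 1 else 0) ∧
    (∀ (a : A) (i : 𝒜.Q), 𝒜.M a i qI = 0)

/-- `𝒜` is a bridge automaton. -/
def IsBridge (𝒜 : WA A S) : Prop :=
  ∃ qI qF, qI ≠ qF ∧ (∀ i, 𝒜.I i = if i = qI then 1 else 0) ∧
    (∀ f, 𝒜.F f = if f = qF then 1 else 0)

/-- The unroll of a loopback automaton with loopback state `q₀`: adjoin a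
fresh final state, redirect all edges ending at `q₀` to it. -/
def unroll (L : WA A S) (q₀ : L.Q) : WA A S where
  Q := L.Q ⊕ Unit
  I := Sum.elim (fun i => if i = q₀ then 1 else 0) (fun _ => 0)
  F := Sum.elim (fun _ => 0) (fun _ => 1)
  M := fun a => Matrix.of fun p q =>
    match p, q with
    | Sum.inl i, Sum.inl j => if j = q₀ then 0 else L.M a i j
    | Sum.inl i, Sum.inr _ => L.M a i q₀
    | Sum.inr _, _ => 0

/-- The conjoin `X ⋆ Y` of two normalized automata (initial/final states
`xI`, `xF` and `yI`, `yF`): the disjoint sum of `X` minus its final state and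
the roll of `Y`, with edges of `X` ending at `xF` redirected to the loopback
state `yI`. -/
def conjoinWA (X : WA A S) (xI xF : X.Q) (Y : WA A S) (yI yF : Y.Q) : WA A S where
  Q := {i : X.Q // i ≠ xF} ⊕ {j : Y.Q // j ≠ yF}
  I := Sum.elim (fun i => if i.1 = xI then 1 else 0) (fun _ => 0)
  F := Sum.elim (fun _ => 0) (fun j => if j.1 = yI then 1 else 0)
  M := fun a => Matrix.of fun p q =>
    match p, q with
    | Sum.inl i, Sum.inl j => X.M a i.1 j.1
    | Sum.inl i, Sum.inr j => if j.1 = yI then X.M a i.1 xF else 0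
    | Sum.inr _, Sum.inl _ => 0
    | Sum.inr i, Sum.inr j => if j.1 = yI then Y.M a i.1 yF else Y.M a i.1 j.1

/-- The finite slice `w[i..j)` of a biinfinite word. -/
def bpre (w : ℤ → A) (i j : ℤ) : List A :=
  (List.range (j - i).toNat).map (fun k => w (i + k))

/-- A pair of states `(p,q)` is activated by the biinfinite word `w` if for
all `i₀ ≤ j₀` there are `i ≤ i₀` and `j ≥ j₀` with `M(w[i..j))_{p,q} ≠ 0`. -/
def BActivated (𝒜 : WA A S) (w : ℤ → A) (p q : 𝒜.Q) : Prop :=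
  ∀ i₀ j₀ : ℤ, i₀ ≤ j₀ → ∃ i ≤ i₀, ∃ j, j₀ ≤ j ∧ Mword 𝒜 (bpre w i j) p q ≠ 0

/-- The bidiverging behavior
`𝒜(w,i,n) = Σ_{(p,q) activated} I(p)·M(w[i..i+n))_{p,q}·F(q)`. -/
noncomputable def bdivB (𝒜 : WA A S) (w : ℤ → A) (i : ℤ) (n : ℕ) : S :=
  ∑ p : 𝒜.Q × 𝒜.Q,
    if BActivated 𝒜 w p.1 p.2 then
      𝒜.I p.1 * Mword 𝒜 (bpre w i (i + n)) p.1 p.2 * 𝒜.F p.2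
    else 0

/-- `χ_ζ(w,x) = 1` iff arbitrarily long slices of `w` have nonzero coefficient. -/
noncomputable def chiZ (w : ℤ → A) (x : List A → S) : S :=
  if ∀ i₀ j₀ : ℤ, i₀ ≤ j₀ → ∃ i ≤ i₀, ∃ j, j₀ ≤ j ∧ x (bpre w i j) ≠ 0 then 1 else 0

/-- `s^ζ(w,i,n) = s*(w[i..i+n))·χ_ζ(w,s*)`. -/
noncomputable def zetaPS (s : List A → S) : (ℤ → A) → ℤ → ℕ → S :=
  fun w i n => cstar s (bpre w i (i + n)) * chiZ w (cstar s)

/-- The conjoin `(x ⋆ m ⋆ y)(w,i,n) = (x*·m·y*)(w[i..i+n))·χ_ζ(w,x*·m·y*)`. -/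
noncomputable def conjoin3PS (x m y : List A → S) : (ℤ → A) → ℤ → ℕ → S :=
  fun w i n =>
    cmul (cstar x) (cmul m (cstar y)) (bpre w i (i + n)) *
      chiZ w (cmul (cstar x) (cmul m (cstar y)))

/-- `Rat^ζ(S,A)`: the smallest set of bidiverging power series closed under
finite sums and left/right scalar multiplication containing all `x ⋆ m ⋆ y`
and `z^ζ` for proper rational `x`, `m`, `y`, `z`. -/
inductive IsRatZeta : ((ℤ → A) → ℤ → ℕ → S) → Prop
  | zero : IsRatZeta (fun _ _ _ => 0)
  | add {p q : (ℤ → A) → ℤ → ℕ → S} :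
      IsRatZeta p → IsRatZeta q → IsRatZeta (fun w i n => p w i n + q w i n)
  | smul_left (s : S) {p : (ℤ → A) → ℤ → ℕ → S} :
      IsRatZeta p → IsRatZeta (fun w i n => s * p w i n)
  | smul_right (s : S) {p : (ℤ → A) → ℤ → ℕ → S} :
      IsRatZeta p → IsRatZeta (fun w i n => p w i n * s)
  | conjoin {x m y : List A → S} :
      IsRat x → x [] = 0 → IsRat m → m [] = 0 → IsRat y → y [] = 0 →
      IsRatZeta (conjoin3PS x m y)
  | zeta {z : List A → S} : IsRat z → z [] = 0 → IsRatZeta (zetaPS z)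

/-- The conjoin `X ⋆ M̂ ⋆ Y` of three normalized automata: the roll of `X`
(loopback `xI`), the middle of `M̂`, and the roll of `Y` (loopback `yI`), with
the edges of `M̂` leaving `mI` re-sourced at `xI`, the edges of `M̂` entering
`mF` re-targeted at `yI`, and direct `mI → mF` edges becoming `xI → yI`. -/
def conjoin3WA (X : WA A S) (xI xF : X.Q) (Mh : WA A S) (mI mF : Mh.Q)
    (Y : WA A S) (yI yF : Y.Q) : WA A S where
  Q := {i : X.Q // i ≠ xF} ⊕ ({k : Mh.Q // k ≠ mI ∧ k ≠ mF} ⊕ {j : Y.Q // j ≠ yF})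
  I := Sum.elim (fun i => if i.1 = xI then 1 else 0) (fun _ => 0)
  F := Sum.elim (fun _ => 0) (Sum.elim (fun _ => 0) (fun j => if j.1 = yI then 1 else 0))
  M := fun a => Matrix.of fun p q =>
    match p, q with
    | Sum.inl i, Sum.inl j => if j.1 = xI then X.M a i.1 xF else X.M a i.1 j.1
    | Sum.inl i, Sum.inr (Sum.inl k) => if i.1 = xI then Mh.M a mI k.1 else 0
    | Sum.inl i, Sum.inr (Sum.inr j) =>
        if i.1 = xI ∧ j.1 = yI then Mh.M a mI mF else 0
    | Sum.inr (Sum.inl _), Sum.inl _ => 0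
    | Sum.inr (Sum.inl k), Sum.inr (Sum.inl l) => Mh.M a k.1 l.1
    | Sum.inr (Sum.inl k), Sum.inr (Sum.inr j) => if j.1 = yI then Mh.M a k.1 mF else 0
    | Sum.inr (Sum.inr _), Sum.inl _ => 0
    | Sum.inr (Sum.inr _), Sum.inr (Sum.inl _) => 0
    | Sum.inr (Sum.inr i), Sum.inr (Sum.inr j) =>
        if j.1 = yI then Y.M a i.1 yF else Y.M a i.1 j.1

/-- The normalization of an automaton: two fresh states (`inr false` initial,
`inr true` final). -/
@[reducible] def normWA (𝒜 : WA A S) : WA A S where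
  Q := 𝒜.Q ⊕ Bool
  I := Sum.elim (fun _ => 0) (fun b => if b = false then 1 else 0)
  F := Sum.elim (fun _ => 0) (fun b => if b = true then 1 else 0)
  M := fun a => Matrix.of fun p q =>
    match p, q with
    | Sum.inl i, Sum.inl j => 𝒜.M a i j
    | Sum.inl i, Sum.inr b => if b then ∑ f, 𝒜.M a i f * 𝒜.F f else 0
    | Sum.inr false, Sum.inl j => ∑ i, 𝒜.I i * 𝒜.M a i j
    | Sum.inr false, Sum.inr b =>
        if b then ∑ i, ∑ f, 𝒜.I i * 𝒜.M a i f * 𝒜.F f else 0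
    | Sum.inr true, _ => 0

lemma Mword_cons (𝒜 : WA A S) (a : A) (w : List A) :
    Mword 𝒜 (a :: w) = 𝒜.M a * Mword 𝒜 w := by
  simp [Mword]

lemma Mword_nil (𝒜 : WA A S) : Mword 𝒜 ([] : List A) = 1 := by
  simp [Mword]

lemma sum3_perm {Q : Type} [Fintype Q] (g : Q → Q → Q → S) :
    ∑ j, ∑ f, ∑ i, g i j f = ∑ i, ∑ f, ∑ j, g i j f :=
  calc ∑ j, ∑ f, ∑ i, g i j f
      = ∑ j, ∑ i, ∑ f, g i j f :=
        Finset.sum_congr rfl fun j _ => Finset.sum_comm (f := fun f i => g i j f)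
    _ = ∑ i, ∑ j, ∑ f, g i j f := Finset.sum_comm (f := fun j i => ∑ f, g i j f)
    _ = ∑ i, ∑ f, ∑ j, g i j f :=
        Finset.sum_congr rfl fun i _ => Finset.sum_comm (f := fun j f => g i j f)

lemma normWA_key (𝒜 : WA A S) (w : List A) :
    (∀ i, Mword (normWA 𝒜) w (Sum.inl i) (Sum.inr true)
        = if w = [] then 0 else ∑ f, Mword 𝒜 w i f * 𝒜.F f)
    ∧ Mword (normWA 𝒜) w (Sum.inr true) (Sum.inr true)
        = (if w = [] then 1 else 0)
    ∧ Mword (normWA 𝒜) w (Sum.inr false) (Sum.inr true)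
        = (if w = [] then 0 else convB 𝒜 w) := by
  induction w with
  | nil =>
    refine ⟨fun i => ?_, ?_, ?_⟩ <;> simp [Mword_nil, Matrix.one_apply]
  | cons a w ih =>
    obtain ⟨h1, h2, h3⟩ := ih
    have hmul : ∀ p, Mword (normWA 𝒜) (a :: w) p (Sum.inr true)
        = ∑ q : 𝒜.Q ⊕ Bool, (normWA 𝒜).M a p q
            * Mword (normWA 𝒜) w q (Sum.inr true) := by
      intro p
      rw [Mword_cons, Matrix.mul_apply]
    refine ⟨fun i => ?_, ?_, ?_⟩
    · rw [hmul]
      rw [Fintype.sum_sum_type]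
      simp only [h2, h3, h1, Fintype.sum_bool]
      by_cases hw : w = []
      · subst hw
        simp [normWA, Mword_cons, Mword_nil]
      · simp only [hw, if_false, if_true, Bool.false_eq_true, mul_zero,
          mul_one, add_zero, zero_add, zero_mul]
        simp only [normWA, Matrix.of_apply, if_true, mul_zero, mul_one,
          add_zero, zero_add, if_false]
        simp only [Bool.false_eq_true, if_false, zero_mul, mul_zero,
          add_zero, List.cons_ne_nil, reduceCtorEq]
        simp only [Mword_cons, Matrix.mul_apply, Finset.sum_mul,
          Finset.mul_sum, mul_assoc]
        rw [Finset.sum_comm]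
    · rw [hmul]
      simp [normWA]
    · rw [hmul]
      rw [Fintype.sum_sum_type]
      simp only [h2, h3, h1, Fintype.sum_bool]
      by_cases hw : w = []
      · subst hw
        simp [normWA, convB, Mword_cons, Mword_nil]
      · simp only [hw, if_false, if_true, Bool.false_eq_true, mul_zero,
          mul_one, add_zero, zero_add, zero_mul]
        simp only [normWA, Matrix.of_apply, mul_zero, mul_one,
          add_zero, zero_add, if_false]
        simp only [Bool.false_eq_true, if_false, zero_mul, mul_zero,
          add_zero, List.cons_ne_nil, reduceCtorEq]
        simp only [convB, Mword_cons, Matrix.mul_apply, Finset.sum_mul,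
          Finset.mul_sum, mul_assoc]
        exact sum3_perm fun i j f => 𝒜.I i * (𝒜.M a i j * (Mword 𝒜 w j f * 𝒜.F f))

/-- every automaton rejecting the empty word has an equivalent
normalized automaton. -/
theorem exists_normalized (A S : Type) [Semiring S] (𝒜 : WA A S)
    (h : convB 𝒜 [] = 0) :
    ∃ N : WA A S, IsNormalized N ∧ ∀ w : List A, convB N w = convB 𝒜 w := by
  refine ⟨normWA 𝒜, ⟨Sum.inr false, Sum.inr true, ?_, ?_, ?_, ?_, ?_⟩, ?_⟩
  · simp only [ne_eq, Sum.inr.injEq]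
    exact fun hc => Bool.false_ne_true hc
  · rintro (i | b) <;> simp [normWA]
  · rintro (f | b) <;> simp [normWA]
  · rintro a (i | b) <;> simp [normWA] <;> cases b <;> simp [normWA]
  · rintro a (j | b) <;> simp [normWA]
  · intro w
    have hI : ∀ i, (normWA 𝒜).I i = if i = Sum.inr false then 1 else 0 := by
      rintro (i | b) <;> simp [normWA] <;> cases b <;> simp
    have hF : ∀ f, (normWA 𝒜).F f = if f = Sum.inr true then 1 else 0 := by
      rintro (f | b) <;> simp [normWA] <;> cases b <;> simp
    have : convB (normWA 𝒜) w
        = Mword (normWA 𝒜) w (Sum.inr false) (Sum.inr true) := by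
      simp only [convB, hI, hF, ite_mul, mul_ite, one_mul, mul_one, zero_mul,
        mul_zero]
      simp [Finset.sum_ite_eq', Finset.sum_ite_eq]
    rw [this, (normWA_key 𝒜 w).2.2]
    by_cases hw : w = []
    · subst hw; simp [h]
    · simp [hw]
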